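/- arXiv:2511.14568 — 3 statements merged into one kernel-verified Lean document; each statement's English description precedes it below -/
import Mathlib

section
/- Let α > 0 (Poisson parameter). Set e := Exp∘(α·(Exp - 1)) - 1 ∈ ℝ⟦X⟧. Then for all natural numbers n ≥ k: c_n( e^k / k! ) = Σ_{j=k}^{n} α^j·S₂(j,k)·S₂(n,j). -/
open PowerSeries Finset

noncomputable section

/-- `cN n F = n! * (coefficient of X^n in F)`. -/
def cN (n : ℕ) (F : PowerSeries ℝ) : ℝ := (n.factorial : ℝ) * PowerSeries.coeff n F

/-- Formal substitution `F ∘ G` (faithful when `G` has zero constant coefficient). -/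
def pcomp (F G : PowerSeries ℝ) : PowerSeries ℝ :=
  PowerSeries.mk fun n =>
    ∑ k ∈ Finset.range (n + 1), (PowerSeries.coeff k F) * (PowerSeries.coeff n (G ^ k))

/-- The formal series of log(1+X). -/
def L : PowerSeries ℝ := PowerSeries.mk fun n => if n = 0 then 0 else (-1 : ℝ) ^ (n - 1) / n

/-- Falling factorial `(y)_m`. -/
def ff (y : ℝ) (m : ℕ) : ℝ := ∏ i ∈ Finset.range m, (y - i)

/-- Rising factorial `⟨y⟩_m`. -/
def rf (y : ℝ) (m : ℕ) : ℝ := ∏ i ∈ Finset.range m, (y + i)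

/-- Degenerate falling factorial `(x)_{n,λ}`. -/
def ffl (x : ℝ) (n : ℕ) (lam : ℝ) : ℝ := ∏ i ∈ Finset.range n, (x - i * lam)

/-- Stirling numbers of the second kind. -/
def S2 (n k : ℕ) : ℝ :=
  (k.factorial : ℝ)⁻¹ * ∑ j ∈ Finset.range (k + 1), (-1 : ℝ) ^ (k - j) * (k.choose j) * (j : ℝ) ^ n

/-- The falling factorial polynomial `x(x-1)⋯(x-n+1)`. -/
def fallingPoly (n : ℕ) : Polynomial ℝ := ∏ i ∈ Finset.range n, (Polynomial.X - Polynomial.C (i : ℝ))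

/-- (Signed) Stirling numbers of the first kind. -/
def S1 (n k : ℕ) : ℝ := (fallingPoly n).coeff k

/-- Degenerate Stirling numbers of the second kind. -/
def S2d (lam : ℝ) (n k : ℕ) : ℝ :=
  (k.factorial : ℝ)⁻¹ *
    ∑ j ∈ Finset.range (k + 1), (-1 : ℝ) ^ (k - j) * (k.choose j) * ffl (j : ℝ) n lam

/-- Formal degenerate exponential `e_λ`. -/
def degExp (lam : ℝ) : PowerSeries ℝ := PowerSeries.mk fun n => ffl 1 n lam / n.factorial

/-- Formal degenerate logarithm `Λ_λ` of `1+X`. -/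
def degLog (lam : ℝ) : PowerSeries ℝ :=
  lam⁻¹ • PowerSeries.mk fun n => if n = 0 then 0 else ff lam n / n.factorial

/-- Degenerate Stirling numbers of the first kind. -/
def S1d (lam : ℝ) (n k : ℕ) : ℝ := cN n ((k.factorial : ℝ)⁻¹ • (degLog lam) ^ k)

/-- Binomial series `(1+X)^c`. -/
def binser (c : ℝ) : PowerSeries ℝ := PowerSeries.mk fun n => ff c n / n.factorial

/-- Frobenius–Euler numbers of order `j`. -/
def FE (u : ℝ) (j n : ℕ) : ℝ :=
  cN n (((1 - u) • (PowerSeries.exp ℝ - PowerSeries.C u)⁻¹) ^ j)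


-- Auxiliary lemmas --------------------------------------------------------

lemma coeff_pow_zero_of_lt {g : PowerSeries ℝ} (hg : PowerSeries.constantCoeff g = 0)
    {n m : ℕ} (h : n < m) : PowerSeries.coeff n (g ^ m) = 0 :=
  PowerSeries.X_pow_dvd_iff.mp (pow_dvd_pow_of_dvd (PowerSeries.X_dvd_iff.mpr hg) m) n h

lemma coeff_exp_pow' (i m : ℕ) :
    PowerSeries.coeff m ((PowerSeries.exp ℝ) ^ i) = (i : ℝ) ^ m / m.factorial := by
  rw [PowerSeries.exp_pow_eq_rescale_exp, PowerSeries.coeff_rescale, PowerSeries.coeff_exp]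
  simp [div_eq_mul_inv]

lemma coeff_aeval' {g : PowerSeries ℝ} (hg : PowerSeries.constantCoeff g = 0)
    (R : Polynomial ℝ) {p N : ℕ} (hpN : p ≤ N) :
    PowerSeries.coeff p (Polynomial.aeval g R) =
      ∑ i ∈ Finset.range (N + 1), R.coeff i * PowerSeries.coeff p (g ^ i) := by
  rw [Polynomial.aeval_eq_sum_range, map_sum]
  simp only [PowerSeries.coeff_smul, smul_eq_mul]
  set M := max R.natDegree N with hM
  have h1 : ∑ i ∈ Finset.range (R.natDegree + 1), R.coeff i * PowerSeries.coeff p (g ^ i)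
      = ∑ i ∈ Finset.range (M + 1), R.coeff i * PowerSeries.coeff p (g ^ i) := by
    apply Finset.sum_subset (Finset.range_subset_range.mpr (by omega))
    intro i hi hni
    rw [Polynomial.coeff_eq_zero_of_natDegree_lt (by simp at hni; omega), zero_mul]
  have h2 : ∑ i ∈ Finset.range (N + 1), R.coeff i * PowerSeries.coeff p (g ^ i)
      = ∑ i ∈ Finset.range (M + 1), R.coeff i * PowerSeries.coeff p (g ^ i) := by
    apply Finset.sum_subset (Finset.range_subset_range.mpr (by omega))
    intro i hi hni
    rw [coeff_pow_zero_of_lt hg (by simp at hni; omega), mul_zero]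
  rw [h1, h2]

lemma coeff_exm1_pow' (j m : ℕ) :
    PowerSeries.coeff m ((PowerSeries.exp ℝ - 1) ^ j)
      = S2 m j * j.factorial / m.factorial := by
  have hexp : (PowerSeries.exp ℝ - 1) ^ j
      = ∑ i ∈ Finset.range (j + 1),
          PowerSeries.C ((-1 : ℝ) ^ (j - i) * (j.choose i)) * (PowerSeries.exp ℝ) ^ i := by
    rw [sub_eq_add_neg, add_pow]
    apply Finset.sum_congr rfl
    intro i hi
    simp only [map_mul, map_pow, map_neg, map_one, map_natCast]
    ring
  rw [hexp, map_sum]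
  simp only [PowerSeries.coeff_C_mul, coeff_exp_pow']
  rw [S2]
  have hj : (j.factorial : ℝ) ≠ 0 := Nat.cast_ne_zero.mpr j.factorial_ne_zero
  rw [mul_comm ((j.factorial : ℝ)⁻¹) _, mul_div_assoc, mul_assoc,
    ← mul_div_assoc ((j.factorial : ℝ)⁻¹), inv_mul_cancel₀ hj, mul_one_div, Finset.sum_div]
  apply Finset.sum_congr rfl
  intro i _
  ring

lemma S2_eq_zero' {j k : ℕ} (h : j < k) : S2 j k = 0 := by
  have h0 : PowerSeries.constantCoeff (PowerSeries.exp ℝ - 1) = 0 := by simp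
  have hc := coeff_pow_zero_of_lt h0 h
  rw [coeff_exm1_pow'] at hc
  have hk : (k.factorial : ℝ) ≠ 0 := Nat.cast_ne_zero.mpr k.factorial_ne_zero
  have hjf : (j.factorial : ℝ) ≠ 0 := Nat.cast_ne_zero.mpr j.factorial_ne_zero
  field_simp at hc
  exact (mul_eq_zero.mp (hc.trans (mul_zero _))).resolve_right hk


theorem stmt5 (α : ℝ) (hα : 0 < α) (n k : ℕ) (hkn : k ≤ n) :
    cN n ((k.factorial : ℝ)⁻¹ • (pcomp (PowerSeries.exp ℝ) (α • (PowerSeries.exp ℝ - 1)) - 1) ^ k)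
      = ∑ j ∈ Finset.Icc k n, α ^ j * S2 j k * S2 n j := by
  set g : PowerSeries ℝ := α • (PowerSeries.exp ℝ - 1) with hgdef
  have hg : PowerSeries.constantCoeff g = 0 := by
    rw [hgdef, ← PowerSeries.coeff_zero_eq_constantCoeff_apply, PowerSeries.coeff_smul]
    simp [PowerSeries.coeff_zero_eq_constantCoeff]
  set E : PowerSeries ℝ := pcomp (PowerSeries.exp ℝ) g - 1 with hEdef
  set Q : Polynomial ℝ := PowerSeries.trunc (n + 1) (PowerSeries.exp ℝ - 1) with hQdef
  set A : PowerSeries ℝ := Polynomial.aeval g Q with hAdef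
  -- Step 1: E and A agree up to degree n
  have claim1 : ∀ p ≤ n, PowerSeries.coeff p E = PowerSeries.coeff p A := by
    intro p hp
    rw [hAdef, coeff_aeval' hg Q (N := n) hp]
    have hext : ∑ m ∈ Finset.range (p + 1),
          PowerSeries.coeff m (PowerSeries.exp ℝ) * PowerSeries.coeff p (g ^ m)
        = ∑ m ∈ Finset.range (n + 1),
          PowerSeries.coeff m (PowerSeries.exp ℝ) * PowerSeries.coeff p (g ^ m) := by
      apply Finset.sum_subset (Finset.range_subset_range.mpr (by omega))
      intro m hm hnm
      rw [coeff_pow_zero_of_lt hg (by simp at hm hnm ⊢; omega), mul_zero]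
    rw [hEdef, map_sub, pcomp, PowerSeries.coeff_mk, hext]
    have hQc : ∀ i ∈ Finset.range (n + 1),
        Q.coeff i * PowerSeries.coeff p (g ^ i)
          = (PowerSeries.coeff i (PowerSeries.exp ℝ) - PowerSeries.coeff i 1)
              * PowerSeries.coeff p (g ^ i) := by
      intro i hi
      rw [hQdef, PowerSeries.coeff_trunc, if_pos (Finset.mem_range.mp hi), map_sub]
    rw [Finset.sum_congr rfl hQc]
    simp only [sub_mul, Finset.sum_sub_distrib]
    congr 1
    rw [Finset.sum_eq_single 0]
    · simp [PowerSeries.coeff_one]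
    · intro m _ hm0
      simp [PowerSeries.coeff_one, hm0]
    · intro h; exact absurd (Finset.mem_range.mpr (by omega)) h
  -- Step 2: coeff n (E^k) = coeff n (A^k)
  have htr : PowerSeries.trunc (n + 1) E = PowerSeries.trunc (n + 1) A := by
    apply Polynomial.ext
    intro m
    rw [PowerSeries.coeff_trunc, PowerSeries.coeff_trunc]
    split_ifs with h
    · exact claim1 m (by omega)
    · rfl
  have step2 : PowerSeries.coeff n (E ^ k) = PowerSeries.coeff n (A ^ k) := by
    have h1 := PowerSeries.trunc_trunc_pow E (n + 1) k
    have h2 := PowerSeries.trunc_trunc_pow A (n + 1) k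
    have h3 : PowerSeries.trunc (n + 1) (E ^ k) = PowerSeries.trunc (n + 1) (A ^ k) := by
      rw [← h1, ← h2, htr]
    have h4 := congrArg (fun P => Polynomial.coeff P n) h3
    simpa [PowerSeries.coeff_trunc] using h4
  -- Step 3-5
  have step3 : A ^ k = Polynomial.aeval g (Q ^ k) := (map_pow (Polynomial.aeval g) Q k).symm
  have hQk : ∀ i ∈ Finset.range (n + 1),
      (Q ^ k).coeff i = PowerSeries.coeff i ((PowerSeries.exp ℝ - 1) ^ k) := by
    intro i hi
    have hi' : i < n + 1 := Finset.mem_range.mp hi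
    have h1 := PowerSeries.trunc_trunc_pow (PowerSeries.exp ℝ - 1) (n + 1) k
    have h2 := congrArg (fun P => Polynomial.coeff P i) h1
    simp only [PowerSeries.coeff_trunc, if_pos hi'] at h2
    rw [← h2, ← hQdef, ← Polynomial.coe_pow, Polynomial.coeff_coe]
  have hgpow : ∀ i : ℕ, PowerSeries.coeff n (g ^ i)
      = α ^ i * PowerSeries.coeff n ((PowerSeries.exp ℝ - 1) ^ i) := by
    intro i
    rw [hgdef, smul_pow, PowerSeries.coeff_smul, smul_eq_mul]
  -- assemble
  have key : PowerSeries.coeff n (E ^ k)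
      = ∑ i ∈ Finset.range (n + 1),
          (S2 i k * k.factorial / i.factorial)
            * (α ^ i * (S2 n i * i.factorial / n.factorial)) := by
    rw [step2, step3, coeff_aeval' hg (Q ^ k) (le_refl n)]
    apply Finset.sum_congr rfl
    intro i hi
    rw [hQk i hi, coeff_exm1_pow', hgpow, coeff_exm1_pow']
  rw [cN, PowerSeries.coeff_smul, smul_eq_mul, key, Finset.mul_sum, Finset.mul_sum]
  have hsum : ∀ i ∈ Finset.range (n + 1),
      (n.factorial : ℝ) * ((k.factorial : ℝ)⁻¹ *
        (S2 i k * k.factorial / i.factorial * (α ^ i * (S2 n i * i.factorial / n.factorial))))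
      = α ^ i * S2 i k * S2 n i := by
    intro i _
    have h1 : (n.factorial : ℝ) ≠ 0 := Nat.cast_ne_zero.mpr n.factorial_ne_zero
    have h2 : (k.factorial : ℝ) ≠ 0 := Nat.cast_ne_zero.mpr k.factorial_ne_zero
    have h3 : (i.factorial : ℝ) ≠ 0 := Nat.cast_ne_zero.mpr i.factorial_ne_zero
    field_simp
  rw [Finset.sum_congr rfl hsum]
  symm
  apply Finset.sum_subset
  · intro j hj
    simp only [Finset.mem_Icc] at hj
    exact Finset.mem_range.mpr (by omega)
  · intro j hj hnj
    simp only [Finset.mem_range] at hj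
    simp only [Finset.mem_Icc] at hnj
    have : j < k := by omega
    rw [S2_eq_zero' this]
    ring
end
end

section
/- Let 0 < p < 1 (geometric parameter). Set ē := L ∘ ( p·X·(1 + (1-p)·X)^{-1} ) ∈ ℝ⟦X⟧. Then for all natural numbers n ≥ k: c_n( ē^k / k! ) = Σ_{j=k}^{n} binom(n,j)·(n-1)_{n-j}·p^j·(p-1)^{n-j}·S₁(j,k). -/
open PowerSeries Finset

noncomputable section

lemma coeff_pcomp (F G : PowerSeries ℝ) (n : ℕ) :
    coeff n (pcomp F G) = ∑ k ∈ range (n + 1), coeff k F * coeff n (G ^ k) := by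
  simp [pcomp]

lemma coeff_pow_eq_zero {G : PowerSeries ℝ} (hG : constantCoeff G = 0) {k n : ℕ}
    (h : n < k) : coeff n (G ^ k) = 0 := by
  have hd : (X : PowerSeries ℝ) ^ k ∣ G ^ k :=
    pow_dvd_pow_of_dvd (X_dvd_iff.mpr hG) k
  exact X_pow_dvd_iff.mp hd n h

lemma pcomp_one (G : PowerSeries ℝ) : pcomp 1 G = 1 := by
  ext n
  rw [coeff_pcomp, Finset.sum_eq_single 0]
  · simp
  · intro b _ hb; simp [coeff_one, hb]
  · simp

lemma pcomp_mul (F H G : PowerSeries ℝ) (hG : constantCoeff G = 0) :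
    pcomp (F * H) G = pcomp F G * pcomp H G := by
  ext n
  set f : ℕ × ℕ → ℝ := fun q => coeff q.1 F * coeff q.2 H * coeff n (G ^ (q.1 + q.2)) with hf
  have hsq : ∑ q ∈ (range (n+1) ×ˢ range (n+1)).filter (fun q => q.1 + q.2 ≤ n), f q
      = ∑ q ∈ range (n+1) ×ˢ range (n+1), f q := by
    rw [Finset.sum_filter_of_ne]
    intro q _ hq
    by_contra hc
    exact hq (by simp [hf, coeff_pow_eq_zero hG (by omega : n < q.1 + q.2)])
  have lhs : coeff n (pcomp (F * H) G)
      = ∑ q ∈ range (n+1) ×ˢ range (n+1), f q := by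
    rw [coeff_pcomp, ← hsq]
    calc ∑ k ∈ range (n+1), coeff k (F*H) * coeff n (G^k)
        = ∑ k ∈ range (n+1), ∑ q ∈ antidiagonal k, f q := by
          refine Finset.sum_congr rfl fun k hk => ?_
          rw [coeff_mul, Finset.sum_mul]
          refine Finset.sum_congr rfl fun q hq => ?_
          rw [Finset.HasAntidiagonal.mem_antidiagonal] at hq
          simp [hf, hq, mul_assoc]
      _ = ∑ x ∈ (range (n+1)).sigma (fun k => antidiagonal k), f x.2 := by
          rw [Finset.sum_sigma]
      _ = ∑ q ∈ (range (n+1) ×ˢ range (n+1)).filter (fun q => q.1 + q.2 ≤ n), f q := by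
          refine Finset.sum_nbij' (fun x => x.2) (fun q => ⟨q.1 + q.2, q⟩) ?_ ?_ ?_ ?_ ?_
          · rintro ⟨k, q⟩ hx
            simp only [Finset.mem_sigma, Finset.mem_range, Finset.HasAntidiagonal.mem_antidiagonal] at hx
            simp only [Finset.mem_filter, Finset.mem_product, Finset.mem_range]
            omega
          · rintro q hq
            simp only [Finset.mem_filter, Finset.mem_product, Finset.mem_range] at hq
            simp only [Finset.mem_sigma, Finset.mem_range, Finset.HasAntidiagonal.mem_antidiagonal]
            exact ⟨by omega, trivial⟩
          · rintro ⟨k, q⟩ hx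
            simp only [Finset.mem_sigma, Finset.mem_range, Finset.HasAntidiagonal.mem_antidiagonal] at hx
            simp [hx.2]
          · rintro q _; rfl
          · rintro x _; rfl
  have rhs : coeff n (pcomp F G * pcomp H G)
      = ∑ q ∈ range (n+1) ×ˢ range (n+1), f q := by
    rw [coeff_mul]
    have step1 : ∀ q ∈ antidiagonal n,
        coeff q.1 (pcomp F G) * coeff q.2 (pcomp H G)
        = ∑ i ∈ range (n+1), ∑ l ∈ range (n+1),
            (coeff i F * coeff q.1 (G^i)) * (coeff l H * coeff q.2 (G^l)) := by
      intro q hq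
      rw [Finset.HasAntidiagonal.mem_antidiagonal] at hq
      rw [coeff_pcomp, coeff_pcomp]
      have e1 : ∑ i ∈ range (q.1+1), coeff i F * coeff q.1 (G^i)
          = ∑ i ∈ range (n+1), coeff i F * coeff q.1 (G^i) := by
        refine Finset.sum_subset ?_ ?_
        · intro i hi; simp only [Finset.mem_range] at *; omega
        · intro i _ hi
          simp only [Finset.mem_range, not_lt] at hi
          rw [coeff_pow_eq_zero hG (by omega), mul_zero]
      have e2 : ∑ l ∈ range (q.2+1), coeff l H * coeff q.2 (G^l)
          = ∑ l ∈ range (n+1), coeff l H * coeff q.2 (G^l) := by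
        refine Finset.sum_subset ?_ ?_
        · intro i hi; simp only [Finset.mem_range] at *; omega
        · intro i _ hi
          simp only [Finset.mem_range, not_lt] at hi
          rw [coeff_pow_eq_zero hG (by omega), mul_zero]
      rw [e1, e2, Finset.sum_mul_sum]
    rw [Finset.sum_congr rfl step1, Finset.sum_comm]
    rw [Finset.sum_product]
    refine Finset.sum_congr rfl fun i _ => ?_
    rw [Finset.sum_comm]
    refine Finset.sum_congr rfl fun l _ => ?_
    have : ∑ q ∈ antidiagonal n, (coeff i F * coeff q.1 (G^i)) * (coeff l H * coeff q.2 (G^l))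
        = coeff i F * coeff l H * ∑ q ∈ antidiagonal n, coeff q.1 (G^i) * coeff q.2 (G^l) := by
      rw [Finset.mul_sum]; refine Finset.sum_congr rfl fun q _ => by ring
    rw [this, ← coeff_mul, ← pow_add]
  rw [lhs, rhs]

lemma constantCoeff_L : constantCoeff L = 0 := by
  rw [← coeff_zero_eq_constantCoeff_apply]
  simp [L]

lemma coeff_L_succ (m : ℕ) : coeff (m + 1) L = (-1 : ℝ) ^ m / (m + 1) := by
  simp [L]

lemma one_add_X_mul_dL : (1 + X : PowerSeries ℝ) * (d⁄dX ℝ) L = 1 := by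
  ext m
  rw [add_mul, one_mul, map_add]
  cases m with
  | zero =>
    have h0 : coeff 0 ((X : PowerSeries ℝ) * (d⁄dX ℝ) L) = 0 := by
      rw [coeff_zero_eq_constantCoeff_apply, map_mul, constantCoeff_X, zero_mul]
    rw [h0, coeff_derivative, coeff_L_succ]
    simp
  | succ m =>
    rw [coeff_succ_X_mul, coeff_derivative, coeff_derivative, coeff_L_succ, coeff_L_succ]
    rw [coeff_one]
    have h1 : ((m : ℝ) + 1) ≠ 0 := by positivity
    have h2 : ((m : ℝ) + 1 + 1) ≠ 0 := by positivity
    field_simp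
    simp
    ring

lemma coeff_X_mul_dF (F : PowerSeries ℝ) (j : ℕ) :
    coeff j ((X : PowerSeries ℝ) * (d⁄dX ℝ) F) = coeff j F * j := by
  cases j with
  | zero =>
    rw [coeff_zero_eq_constantCoeff_apply, map_mul]
    simp
  | succ m =>
    rw [coeff_succ_X_mul, coeff_derivative]
    push_cast; ring

lemma L_rec (k j : ℕ) :
    coeff (j + 1) (L ^ (k + 1)) * (j + 1) + coeff j (L ^ (k + 1)) * j
      = ((k : ℝ) + 1) * coeff j (L ^ k) := by
  have hD : (d⁄dX ℝ) (L ^ (k + 1)) = (k + 1) • (L ^ k • (d⁄dX ℝ) L) := by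
    have := Derivation.leibniz_pow (d⁄dX ℝ) (a := L) (k + 1)
    simpa using this
  have key : (1 + X : PowerSeries ℝ) * (d⁄dX ℝ) (L ^ (k + 1)) = (k + 1) • L ^ k := by
    rw [hD]
    rw [smul_eq_mul (a := L ^ k)]
    rw [mul_smul_comm]
    congr 1
    rw [show (1 + X : PowerSeries ℝ) * (L ^ k * (d⁄dX ℝ) L)
        = L ^ k * ((1 + X) * (d⁄dX ℝ) L) by ring, one_add_X_mul_dL, mul_one]
  have := congrArg (coeff j) key
  rw [add_mul, one_mul, map_add, coeff_X_mul_dF, coeff_derivative] at this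
  rw [map_nsmul, nsmul_eq_mul] at this
  push_cast at this
  linarith [this]

lemma S1_rec (j k : ℕ) : S1 (j+1) (k+1) = S1 j k - (j:ℝ) * S1 j (k+1) := by
  unfold S1 fallingPoly
  rw [Finset.prod_range_succ, mul_sub, Polynomial.coeff_sub, Polynomial.coeff_mul_X,
    Polynomial.coeff_mul_C]
  ring

lemma key_L (j : ℕ) : ∀ k : ℕ,
    (j.factorial : ℝ) * coeff j (L ^ k) = (k.factorial : ℝ) * S1 j k := by
  induction j with
  | zero =>
    intro k
    rw [coeff_zero_eq_constantCoeff_apply, map_pow, constantCoeff_L]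
    cases k with
    | zero => simp [S1, fallingPoly]
    | succ m => simp [S1, fallingPoly, Polynomial.coeff_one]
  | succ j ih =>
    intro k
    cases k with
    | zero =>
      have h1 : coeff (j+1) ((1 : PowerSeries ℝ)) = 0 := by simp
      have h2 : S1 (j+1) 0 = 0 := by
        unfold S1
        rw [Polynomial.coeff_zero_eq_eval_zero]
        unfold fallingPoly
        rw [Polynomial.eval_prod]
        refine Finset.prod_eq_zero (Finset.mem_range.mpr (Nat.succ_pos j)) ?_
        simp
      rw [pow_zero, h1, h2]
      ring
    | succ m =>
      have R := L_rec m j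
      have I1 := ih m
      have I2 := ih (m+1)
      have S := S1_rec j m
      simp only [Nat.factorial_succ, Nat.cast_mul, Nat.cast_add, Nat.cast_one] at I2 ⊢
      linear_combination (j.factorial : ℝ) * R + ((m:ℝ)+1) * I1 - (j:ℝ) * I2
        - (((m:ℝ)+1) * (m.factorial : ℝ)) * S

lemma hs (j : ℕ) : ∀ n : ℕ, ∑ u ∈ range (n+1), (u + j).choose u = (n + j + 1).choose n := by
  intro n
  induction n with
  | zero => simp
  | succ n ihn =>
    rw [Finset.sum_range_succ, ihn, show n + 1 + j = n + j + 1 from by omega]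
    exact (Nat.choose_succ_succ (n + j + 1) n).symm

lemma hs0 (j n : ℕ) : ∑ u ∈ range (n+1), (u + j - 1).choose u = (n + j).choose n := by
  cases j with
  | zero =>
    have h1 : ∑ u ∈ range (n+1), (u + 0 - 1).choose u = 1 := by
      rw [Finset.sum_eq_single 0]
      · simp
      · intro u _ hu
        exact Nat.choose_eq_zero_of_lt (by omega)
      · simp
    rw [h1, Nat.add_zero, Nat.choose_self]
  | succ s =>
    have he : ∀ u, u + (s+1) - 1 = u + s := fun u => by omega
    simp only [he]
    rw [hs s n, show n + s + 1 = n + (s + 1) from by omega]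

lemma coeff_geo_pow (p : ℝ) (j : ℕ) : ∀ n : ℕ,
    coeff n ((PowerSeries.mk fun m => (p-1)^m : PowerSeries ℝ) ^ j)
      = ((n + j - 1).choose n : ℝ) * (p-1)^n := by
  induction j with
  | zero =>
    intro n
    cases n with
    | zero => simp
    | succ m =>
      rw [pow_zero, coeff_one]
      simp only [Nat.succ_ne_zero, if_false]
      rw [show m + 1 + 0 - 1 = m from by omega, Nat.choose_eq_zero_of_lt (by omega)]
      simp
  | succ j ihj =>
    intro n
    rw [pow_succ, coeff_mul, Finset.Nat.sum_antidiagonal_eq_sum_range_succ_mk]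
    have step : ∀ u ∈ range (n+1),
        coeff u ((PowerSeries.mk fun m => (p-1)^m : PowerSeries ℝ) ^ j)
          * coeff (n - u) (PowerSeries.mk fun m => (p-1)^m : PowerSeries ℝ)
        = ((u + j - 1).choose u : ℝ) * (p-1)^n := by
      intro u hu
      rw [Finset.mem_range] at hu
      rw [ihj u, coeff_mk]
      rw [mul_assoc, ← pow_add, show u + (n - u) = n from by omega]
    rw [Finset.sum_congr rfl step, ← Finset.sum_mul, ← Nat.cast_sum, hs0 j n,
      show n + (j + 1) - 1 = n + j from by omega]

lemma inv_one_add (p : ℝ) :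
    (1 + (1 - p) • X : PowerSeries ℝ)⁻¹ = PowerSeries.mk fun m => (p-1)^m := by
  have hc : constantCoeff (1 + (1 - p) • X : PowerSeries ℝ) ≠ 0 := by
    rw [← coeff_zero_eq_constantCoeff_apply, map_add, coeff_smul]
    simp
  rw [eq_comm, PowerSeries.eq_inv_iff_mul_eq_one hc]
  ext n
  rw [mul_add, mul_one, map_add, mul_smul_comm, coeff_smul]
  cases n with
  | zero =>
    rw [coeff_zero_mul_X]
    simp
  | succ m =>
    rw [coeff_succ_mul_X, coeff_mk, coeff_mk, coeff_one]
    simp only [Nat.succ_ne_zero, if_false, smul_eq_mul]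
    ring

lemma ff_nat : ∀ (m N : ℕ), m ≤ N → ff (N:ℝ) m * ((N - m).factorial : ℝ) = (N.factorial : ℝ) := by
  intro m
  induction m with
  | zero => intro N _; simp [ff]
  | succ m ihm =>
    intro N hm
    have h1 : ff (N:ℝ) (m+1) = ff (N:ℝ) m * ((N:ℝ) - m) := by
      rw [ff, Finset.prod_range_succ, ← ff]
    have h2 : ((N:ℝ) - m) = ((N - m : ℕ) : ℝ) := by
      rw [Nat.cast_sub (by omega)]
    have h3 : (N - m).factorial = (N - m) * (N - (m+1)).factorial := by
      rw [show N - m = (N - (m+1)) + 1 from by omega, Nat.factorial_succ]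
    have := ihm N (by omega)
    rw [h3] at this
    rw [h1, h2]
    push_cast at this ⊢
    linarith [this]

lemma pcomp_pow (F G : PowerSeries ℝ) (hG : constantCoeff G = 0) (k : ℕ) :
    pcomp (F ^ k) G = (pcomp F G) ^ k := by
  induction k with
  | zero => rw [pow_zero, pow_zero, pcomp_one]
  | succ k ih => rw [pow_succ, pow_succ, pcomp_mul _ _ _ hG, ih]

lemma hnum (n j : ℕ) (hj : j ≤ n) :
    (n.factorial : ℝ) * ((n-1).choose (n-j) : ℝ)
      = (n.choose j : ℝ) * ff ((n : ℝ) - 1) (n - j) * (j.factorial : ℝ) := by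
  rcases Nat.eq_zero_or_pos j with hj0 | hj1
  · subst hj0
    rcases Nat.eq_zero_or_pos n with hn0 | hn1
    · subst hn0; norm_num [ff]
    · have hB : (n-1).choose (n-0) = 0 := Nat.choose_eq_zero_of_lt (by omega)
      have hF : ff ((n : ℝ) - 1) (n - 0) = 0 := by
        rw [ff]
        refine Finset.prod_eq_zero (Finset.mem_range.mpr (show n - 1 < n - 0 from by omega)) ?_
        rw [Nat.cast_sub (by omega : 1 ≤ n)]
        norm_num
      rw [hB, hF]
      norm_num
  · have h1c : (n.choose j : ℝ) * (j.factorial : ℝ) * ((n-j).factorial : ℝ)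
        = (n.factorial : ℝ) := by
      exact_mod_cast congrArg (Nat.cast (R := ℝ)) (Nat.choose_mul_factorial_mul_factorial hj)
    have h2 := Nat.choose_mul_factorial_mul_factorial (show n - j ≤ n - 1 from by omega)
    rw [show (n - 1) - (n - j) = j - 1 from by omega] at h2
    have h2c : ((n-1).choose (n-j) : ℝ) * ((n-j).factorial : ℝ) * ((j-1).factorial : ℝ)
        = ((n-1).factorial : ℝ) := by exact_mod_cast congrArg (Nat.cast (R := ℝ)) h2
    have h3 := ff_nat (n - j) (n - 1) (by omega)
    rw [show (n - 1) - (n - j) = j - 1 from by omega] at h3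
    have hcast : (((n : ℕ) - 1 : ℕ) : ℝ) = (n : ℝ) - 1 := by
      rw [Nat.cast_sub (by omega : 1 ≤ n)]; norm_num
    rw [hcast] at h3
    have hne1 : ((n-j).factorial : ℝ) ≠ 0 := Nat.cast_ne_zero.mpr (Nat.factorial_ne_zero _)
    have hne2 : ((j-1).factorial : ℝ) ≠ 0 := Nat.cast_ne_zero.mpr (Nat.factorial_ne_zero _)
    have e1 : (n.factorial : ℝ) * ((n-1).choose (n-j) : ℝ) * (((n-j).factorial : ℝ) * ((j-1).factorial : ℝ))
        = ((n.choose j : ℝ) * ff ((n : ℝ) - 1) (n - j) * (j.factorial : ℝ)) * (((n-j).factorial : ℝ) * ((j-1).factorial : ℝ)) := by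
      linear_combination (n.factorial : ℝ) * h2c
        - ((n.choose j : ℝ) * (j.factorial : ℝ) * ((n-j).factorial : ℝ)) * h3
        - (((n-1).factorial : ℝ)) * h1c
    exact mul_right_cancel₀ (mul_ne_zero hne1 hne2) e1

theorem stmt9 (p : ℝ) (hp0 : 0 < p) (hp1 : p < 1) (n k : ℕ) (hkn : k ≤ n) :
    cN n ((k.factorial : ℝ)⁻¹ •
        (pcomp L (p • PowerSeries.X * (1 + (1 - p) • PowerSeries.X)⁻¹)) ^ k)
      = ∑ j ∈ Finset.Icc k n,
          (n.choose j : ℝ) * ff ((n : ℝ) - 1) (n - j) * p ^ j * (p - 1) ^ (n - j) * S1 j k := by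
  set G : PowerSeries ℝ := p • X * (1 + (1 - p) • X)⁻¹ with hGdef
  have hinv : (1 + (1 - p) • X : PowerSeries ℝ)⁻¹ = PowerSeries.mk fun m => (p-1)^m :=
    inv_one_add p
  have hG0 : constantCoeff G = 0 := by
    rw [hGdef, map_mul, ← coeff_zero_eq_constantCoeff_apply, coeff_smul]
    simp
  have hGj : ∀ j ≤ n, coeff n (G ^ j)
      = ((n-1).choose (n-j) : ℝ) * p ^ j * (p-1) ^ (n-j) := by
    intro j hj
    rw [hGdef, hinv, mul_pow, smul_pow, smul_mul_assoc, coeff_smul, smul_eq_mul]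
    rw [show n = (n - j) + j from by omega, coeff_X_pow_mul, coeff_geo_pow p j (n - j)]
    rw [show n - j + j - 1 = n - 1 from by omega, show n - j + j - j = n - j from by omega]
    ring
  have hpow : (pcomp L G) ^ k = pcomp (L ^ k) G := (pcomp_pow L G hG0 k).symm
  have hIcc : ∑ j ∈ range (n+1), coeff j (L ^ k) * coeff n (G ^ j)
      = ∑ j ∈ Icc k n, coeff j (L ^ k) * coeff n (G ^ j) := by
    refine (Finset.sum_subset ?_ ?_).symm
    · intro j hj
      rw [Finset.mem_Icc] at hj
      rw [Finset.mem_range]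
      omega
    · intro j hj1 hj2
      rw [Finset.mem_range] at hj1
      rw [Finset.mem_Icc] at hj2
      rw [coeff_pow_eq_zero constantCoeff_L (by omega), zero_mul]
  rw [cN, coeff_smul, smul_eq_mul, hpow, coeff_pcomp, hIcc, Finset.mul_sum, Finset.mul_sum]
  refine Finset.sum_congr rfl fun j hj => ?_
  rw [Finset.mem_Icc] at hj
  have hj0 : (j.factorial : ℝ) ≠ 0 := Nat.cast_ne_zero.mpr (Nat.factorial_ne_zero _)
  have hk0 : (k.factorial : ℝ) ≠ 0 := Nat.cast_ne_zero.mpr (Nat.factorial_ne_zero _)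
  have hL : coeff j (L ^ k) = (k.factorial : ℝ) * S1 j k / (j.factorial : ℝ) := by
    rw [eq_div_iff hj0]
    linarith [key_L j k]
  rw [hL, hGj j hj.2]
  have h := hnum n j hj.2
  field_simp
  linear_combination (S1 j k * (p-1) ^ (n-j)) * h
end
end

section
/- Let 0 < p < 1 and set u := 1/(1-p). Then for all natural numbers l ≤ n: Σ_{k=l}^{n} Σ_{j=0}^{k} Σ_{m=l}^{k} (-1)^j·(1/k!)·binom(k,j)·binom(k,m)·(k-1)_{k-m}·(p/(p-1))^m·H_n^{(j)}(u)·S₁(m,l) = δ_{n,l}, where δ_{n,l} is the Kronecker delta. -/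
open PowerSeries Finset

noncomputable section

def W : PowerSeries ℝ := PowerSeries.exp ℝ - 1

def pp (V : ℝ) (k m : ℕ) : ℝ :=
  if m < k then 0 else (V⁻¹) ^ m * (-1 : ℝ) ^ (m - k) * ((m - 1).choose (m - k) : ℝ)

def Phi (g : ℕ → ℝ) : PowerSeries ℝ :=
  PowerSeries.mk fun a => ∑ m ∈ Finset.range (a + 1), g m * PowerSeries.coeff a (W ^ m)

lemma constW : constantCoeff W = 0 := by
  simp [W, constantCoeff_exp]

lemma coeff_W_pow_eq_zero {a m : ℕ} (h : a < m) : PowerSeries.coeff a (W ^ m) = 0 := by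
  obtain ⟨g, hg⟩ : (X : PowerSeries ℝ) ^ m ∣ W ^ m :=
    pow_dvd_pow_of_dvd (PowerSeries.X_dvd_iff.2 constW) m
  rw [hg, PowerSeries.coeff_mul]
  apply Finset.sum_eq_zero
  intro q hq
  rw [Finset.HasAntidiagonal.mem_antidiagonal] at hq
  rw [PowerSeries.coeff_X_pow, if_neg, zero_mul]
  omega

lemma coeff_Phi (g : ℕ → ℝ) {n N : ℕ} (h : n ≤ N) :
    PowerSeries.coeff n (Phi g) = ∑ m ∈ Finset.range (N + 1), g m * PowerSeries.coeff n (W ^ m) := by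
  rw [Phi, PowerSeries.coeff_mk]
  apply Finset.sum_subset
  · exact Finset.range_subset_range.2 (by omega)
  · intro m hm hm2
    rw [Finset.mem_range] at hm2
    rw [coeff_W_pow_eq_zero (by omega), mul_zero]

lemma Phi_mul (g : ℕ → ℝ) (T : PowerSeries ℝ) (n : ℕ) :
    PowerSeries.coeff n (Phi g * T) =
      ∑ m ∈ Finset.range (n + 1), g m * PowerSeries.coeff n (W ^ m * T) := by
  rw [PowerSeries.coeff_mul]
  have h1 : ∀ q ∈ Finset.HasAntidiagonal.antidiagonal n,
      PowerSeries.coeff q.1 (Phi g) * PowerSeries.coeff q.2 T =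
      ∑ m ∈ Finset.range (n + 1), g m * (PowerSeries.coeff q.1 (W ^ m) * PowerSeries.coeff q.2 T) := by
    intro q hq
    rw [Finset.HasAntidiagonal.mem_antidiagonal] at hq
    rw [coeff_Phi g (show q.1 ≤ n by omega), Finset.sum_mul]
    simp [mul_assoc]
  rw [Finset.sum_congr rfl h1, Finset.sum_comm]
  apply Finset.sum_congr rfl
  intro m _
  rw [PowerSeries.coeff_mul, Finset.mul_sum]

lemma pp_rec {V : ℝ} (hV : V ≠ 0) (k m : ℕ) :
    pp V (k + 1) m + V * pp V (k + 1) (m + 1) = pp V k m := by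
  rcases lt_trichotomy m k with h | h | h
  · rw [pp, if_pos (by omega), pp, if_pos (by omega), pp, if_pos h]; ring
  · subst h
    rw [pp, if_pos (by omega), pp, if_neg (by omega), pp, if_neg (by omega)]
    have h1 : m + 1 - (m + 1) = 0 := by omega
    have h2 : m - m = 0 := by omega
    have h3 : m + 1 - 1 = m := by omega
    rw [h1, h2, h3]
    simp only [Nat.choose_zero_right, pow_zero, Nat.cast_one]
    field_simp
    linear_combination V⁻¹ ^ m * mul_inv_cancel₀ hV
  · obtain ⟨t, rfl⟩ : ∃ t, m = k + 1 + t := ⟨m - (k+1), by omega⟩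
    rw [pp, if_neg (by omega), pp, if_neg (by omega), pp, if_neg (by omega)]
    have e1 : k + 1 + t - (k + 1) = t := by omega
    have e2 : k + 1 + t + 1 - (k + 1) = t + 1 := by omega
    have e3 : k + 1 + t - k = t + 1 := by omega
    have e4 : k + 1 + t - 1 = k + t := by omega
    have e5 : k + 1 + t + 1 - 1 = k + t + 1 := by omega
    rw [e1, e2, e3, e4, e5]
    have hp : (k + t + 1).choose (t + 1) = (k + t).choose t + (k + t).choose (t + 1) :=
      Nat.choose_succ_succ' (k + t) t ▸ rfl
    rw [hp]
    push_cast
    field_simp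
    linear_combination (-(V⁻¹ ^ k * V⁻¹ ^ t * (-1 : ℝ) ^ t * V⁻¹ *
      (((k + t).choose t : ℝ) + ((k + t).choose (t + 1) : ℝ)))) * mul_inv_cancel₀ hV
section
variable {V : ℝ}

lemma Phi_mul_C (g : ℕ → ℝ) (c : ℝ) (n : ℕ) :
    PowerSeries.coeff n (Phi g * PowerSeries.C c) =
      ∑ m ∈ Finset.range (n + 1), c * g m * PowerSeries.coeff n (W ^ m) := by
  rw [PowerSeries.coeff_mul_C, coeff_Phi g (le_refl n), Finset.sum_mul]
  apply Finset.sum_congr rfl; intro m _; ring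

lemma Phi_step (hV : V ≠ 0) (k : ℕ) :
    Phi (pp V (k + 1)) * (W + PowerSeries.C V) = Phi (pp V k) * W := by
  ext n
  rw [mul_add, map_add, Phi_mul, Phi_mul, Phi_mul]
  have hWs : ∀ m : ℕ, W ^ m * W = W ^ (m + 1) := fun m => (pow_succ W m).symm
  simp only [hWs]
  have h2 : ∑ m ∈ Finset.range (n+1), pp V (k+1) m * PowerSeries.coeff n (W ^ m * PowerSeries.C V)
      = ∑ m ∈ Finset.range (n+1), V * pp V (k+1) m * PowerSeries.coeff n (W ^ m) := by
    apply Finset.sum_congr rfl; intro m _; rw [PowerSeries.coeff_mul_C]; ring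
  rw [h2]
  -- second sum: reindex
  rw [Finset.sum_range_succ' (fun m => V * pp V (k+1) m * PowerSeries.coeff n (W ^ m)) n]
  have h0 : pp V (k + 1) 0 = 0 := by rw [pp, if_pos (by omega)]
  rw [h0]
  have hlast : V * pp V (k+1) (n+1) * PowerSeries.coeff n (W ^ (n + 1)) = 0 := by
    rw [coeff_W_pow_eq_zero (by omega), mul_zero]
  have hext : ∑ m ∈ Finset.range n, V * pp V (k+1) (m+1) * PowerSeries.coeff n (W ^ (m + 1))
      = ∑ m ∈ Finset.range (n+1), V * pp V (k+1) (m+1) * PowerSeries.coeff n (W ^ (m + 1)) := by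
    rw [Finset.sum_range_succ, hlast, add_zero]
  simp only [mul_zero, zero_mul, add_zero, hext]
  rw [← Finset.sum_add_distrib]
  apply Finset.sum_congr rfl
  intro m _
  have := pp_rec hV k m
  calc pp V (k+1) m * PowerSeries.coeff n (W ^ (m+1)) +
        V * pp V (k+1) (m+1) * PowerSeries.coeff n (W ^ (m+1))
      = (pp V (k+1) m + V * pp V (k+1) (m+1)) * PowerSeries.coeff n (W ^ (m+1)) := by ring
    _ = pp V k m * PowerSeries.coeff n (W ^ (m+1)) := by rw [this]

lemma Phi_pp_zero : Phi (pp V 0) = 1 := by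
  ext n
  rw [coeff_Phi _ (le_refl n)]
  have h : ∀ m ∈ Finset.range (n+1), pp V 0 m * PowerSeries.coeff n (W ^ m)
      = if m = 0 then PowerSeries.coeff n (1 : PowerSeries ℝ) else 0 := by
    intro m _
    rcases Nat.eq_zero_or_pos m with rfl | hm
    · simp [pp]
    · rw [if_neg (by omega), pp, if_neg (by omega)]
      have : (m - 1).choose (m - 0) = 0 := Nat.choose_eq_zero_of_lt (by omega)
      rw [this]
      simp
  rw [Finset.sum_congr rfl h, Finset.sum_ite_eq' (Finset.range (n+1)) 0]
  simp

lemma Phi_mul_pow (hV : V ≠ 0) (k : ℕ) :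
    Phi (pp V k) * (W + PowerSeries.C V) ^ k = W ^ k := by
  induction k with
  | zero => simp [Phi_pp_zero]
  | succ k ih =>
      have : Phi (pp V (k+1)) * (W + PowerSeries.C V) ^ (k+1)
          = (Phi (pp V (k+1)) * (W + PowerSeries.C V)) * (W + PowerSeries.C V) ^ k := by ring
      rw [this, Phi_step hV k]
      calc Phi (pp V k) * W * (W + PowerSeries.C V) ^ k
          = W * (Phi (pp V k) * (W + PowerSeries.C V) ^ k) := by ring
        _ = W * W ^ k := by rw [ih]
        _ = W ^ (k+1) := by ring

end
lemma coeff_exp_pow (j n : ℕ) :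
    PowerSeries.coeff n ((PowerSeries.exp ℝ) ^ j) = (j : ℝ) ^ n * ((n.factorial : ℝ))⁻¹ := by
  rw [PowerSeries.exp_pow_eq_rescale_exp, PowerSeries.coeff_rescale, PowerSeries.coeff_exp]
  have : (algebraMap ℚ ℝ) (1 / (n.factorial : ℚ)) = ((n.factorial : ℝ))⁻¹ := by
    rw [eq_ratCast (algebraMap ℚ ℝ) _]
    push_cast
    rw [one_div]
  rw [this]

lemma cN_W_pow (n m : ℕ) :
    cN n (W ^ m) = ∑ j ∈ Finset.range (m + 1), (-1 : ℝ) ^ (m - j) * (m.choose j : ℝ) * (j : ℝ) ^ n := by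
  have hW : W = PowerSeries.exp ℝ + (-1) := by rw [W]; ring
  rw [hW, add_pow]
  rw [cN, map_sum, Finset.mul_sum]
  apply Finset.sum_congr rfl
  intro j _
  have hm1 : ((-1 : PowerSeries ℝ)) ^ (m - j) = PowerSeries.C ((-1 : ℝ) ^ (m - j)) := by
    rw [map_pow, map_neg, map_one]
  have hc : ((m.choose j : ℕ) : PowerSeries ℝ) = PowerSeries.C ((m.choose j : ℝ)) := by
    rw [map_natCast (PowerSeries.C)]
  rw [hm1, hc, mul_assoc, ← map_mul, PowerSeries.coeff_mul_C, coeff_exp_pow]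
  have hn : (n.factorial : ℝ) ≠ 0 := Nat.cast_ne_zero.2 n.factorial_ne_zero
  field_simp

lemma cN_W_pow' (n m : ℕ) : cN n (W ^ m) = (m.factorial : ℝ) * S2 n m := by
  rw [cN_W_pow, S2, ← mul_assoc, mul_inv_cancel₀ (Nat.cast_ne_zero.2 m.factorial_ne_zero : (m.factorial:ℝ) ≠ 0), one_mul]

lemma S2_eq_zero {n m : ℕ} (h : n < m) : S2 n m = 0 := by
  have h1 := cN_W_pow' n m
  rw [cN, coeff_W_pow_eq_zero h, mul_zero] at h1
  have hm : (m.factorial : ℝ) ≠ 0 := Nat.cast_ne_zero.2 m.factorial_ne_zero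
  rcases mul_eq_zero.1 h1.symm with h2 | h2
  · exact absurd h2 hm
  · exact h2
lemma ff_nat_s18 (N M : ℕ) : ff (N : ℝ) M = (N.descFactorial M : ℝ) := by
  rcases le_or_gt M N with h | h
  · rw [Nat.descFactorial_eq_prod_range, Nat.cast_prod, ff]
    apply Finset.prod_congr rfl
    intro i hi
    rw [Finset.mem_range] at hi
    rw [Nat.cast_sub (by omega)]
  · rw [Nat.descFactorial_eq_zero_iff_lt.2 h, Nat.cast_zero, ff]
    apply Finset.prod_eq_zero (Finset.mem_range.2 h)
    simp

lemma eval_fallingPoly (x : ℝ) (m : ℕ) : (fallingPoly m).eval x = ff x m := by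
  simp [fallingPoly, ff, Polynomial.eval_prod]

lemma S1_eq_zero {m l : ℕ} (h : m < l) : S1 m l = 0 := by
  apply Polynomial.coeff_eq_zero_of_natDegree_lt
  apply lt_of_le_of_lt _ h
  calc (fallingPoly m).natDegree
      = (∏ i ∈ Finset.range m, (Polynomial.X - Polynomial.C (i:ℝ))).natDegree := rfl
    _ ≤ ∑ i ∈ Finset.range m, (Polynomial.X - Polynomial.C (i:ℝ)).natDegree :=
        Polynomial.natDegree_prod_le _ _
    _ ≤ ∑ i ∈ Finset.range m, 1 := by
        apply Finset.sum_le_sum; intro i _; rw [Polynomial.natDegree_X_sub_C]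
    _ = m := by simp

lemma pow_nat_eq_sum (n N : ℕ) :
    ((N : ℝ)) ^ n = ∑ m ∈ Finset.range (n + 1), S2 n m * ff (N : ℝ) m := by
  have h1 : cN n ((PowerSeries.exp ℝ) ^ N) = (N : ℝ) ^ n := by
    rw [cN, coeff_exp_pow]
    have hn : (n.factorial : ℝ) ≠ 0 := Nat.cast_ne_zero.2 n.factorial_ne_zero
    field_simp
  have h2 : (PowerSeries.exp ℝ) ^ N
      = ∑ m ∈ Finset.range (N + 1), W ^ m * 1 ^ (N - m) * ((N.choose m : ℕ) : PowerSeries ℝ) := by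
    rw [← add_pow]
    congr 1
    rw [W]; ring
  have h3 : (N : ℝ) ^ n = ∑ m ∈ Finset.range (N + 1), (N.descFactorial m : ℝ) * S2 n m := by
    rw [← h1, h2, cN, map_sum, Finset.mul_sum]
    apply Finset.sum_congr rfl
    intro m _
    have hc : ((N.choose m : ℕ) : PowerSeries ℝ) = PowerSeries.C ((N.choose m : ℝ)) :=
      (map_natCast (PowerSeries.C) _).symm
    rw [one_pow, mul_one, hc, PowerSeries.coeff_mul_C]
    have : cN n (W ^ m) = (m.factorial : ℝ) * S2 n m := cN_W_pow' n m
    rw [cN] at this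
    rw [Nat.descFactorial_eq_factorial_mul_choose]
    push_cast
    calc (n.factorial : ℝ) * (PowerSeries.coeff n (W ^ m) * (N.choose m : ℝ))
        = ((n.factorial : ℝ) * PowerSeries.coeff n (W ^ m)) * (N.choose m : ℝ) := by ring
      _ = ((m.factorial : ℝ) * S2 n m) * (N.choose m : ℝ) := by rw [this]
      _ = (m.factorial : ℝ) * (N.choose m : ℝ) * S2 n m := by ring
  rw [h3]
  have hL : ∑ m ∈ Finset.range (N + 1), (N.descFactorial m : ℝ) * S2 n m
      = ∑ m ∈ Finset.range (N + n + 1), (N.descFactorial m : ℝ) * S2 n m := by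
    apply Finset.sum_subset (Finset.range_subset_range.2 (by omega))
    intro m _ hm
    rw [Finset.mem_range] at hm
    rw [Nat.descFactorial_eq_zero_iff_lt.2 (by omega), Nat.cast_zero, zero_mul]
  have hR : ∑ m ∈ Finset.range (n + 1), S2 n m * ff (N : ℝ) m
      = ∑ m ∈ Finset.range (N + n + 1), S2 n m * ff (N : ℝ) m := by
    apply Finset.sum_subset (Finset.range_subset_range.2 (by omega))
    intro m _ hm
    rw [Finset.mem_range] at hm
    rw [S2_eq_zero (by omega), zero_mul]
  rw [hL, hR]
  apply Finset.sum_congr rfl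
  intro m _
  rw [ff_nat_s18]
  ring

lemma key_poly (n : ℕ) :
    ∑ m ∈ Finset.range (n + 1), Polynomial.C (S2 n m) * fallingPoly m = Polynomial.X ^ n := by
  have hroot : ∀ N : ℕ,
      ((∑ m ∈ Finset.range (n + 1), Polynomial.C (S2 n m) * fallingPoly m) - Polynomial.X ^ n).IsRoot (N : ℝ) := by
    intro N
    rw [Polynomial.IsRoot, Polynomial.eval_sub, Polynomial.eval_finset_sum]
    simp only [Polynomial.eval_mul, Polynomial.eval_C, eval_fallingPoly, Polynomial.eval_pow,
      Polynomial.eval_X]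
    rw [← pow_nat_eq_sum]
    ring
  have hz : (∑ m ∈ Finset.range (n + 1), Polynomial.C (S2 n m) * fallingPoly m) - Polynomial.X ^ n = 0 := by
    apply Polynomial.eq_zero_of_infinite_isRoot
    exact Set.infinite_of_injective_forall_mem (f := (Nat.cast : ℕ → ℝ)) Nat.cast_injective hroot
  linear_combination (norm := ring_nf) hz

lemma stirling_orth (n l : ℕ) :
    ∑ m ∈ Finset.range (n + 1), S2 n m * S1 m l = if n = l then 1 else 0 := by
  have := congrArg (fun q : Polynomial ℝ => q.coeff l) (key_poly n)
  simp only [Polynomial.finset_sum_coeff, Polynomial.coeff_C_mul, Polynomial.coeff_X_pow] at this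
  rw [show (∑ m ∈ Finset.range (n + 1), S2 n m * S1 m l) = ∑ m ∈ Finset.range (n+1), S2 n m * (fallingPoly m).coeff l from rfl]
  rw [this]
  by_cases h : n = l
  · rw [if_pos h, if_pos h.symm]
  · rw [if_neg h, if_neg (fun hh => h hh.symm)]
lemma alt_sum_choose_real (s : ℕ) :
    ∑ i ∈ Finset.range (s + 1), (-1 : ℝ) ^ i * (s.choose i : ℝ) = if s = 0 then 1 else 0 := by
  have h := Int.alternating_sum_range_choose (n := s)
  have h2 : ((∑ i ∈ Finset.range (s + 1), (-1 : ℤ) ^ i * (s.choose i) : ℤ) : ℝ)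
      = ((if s = 0 then 1 else 0 : ℤ) : ℝ) := by exact_mod_cast congrArg (fun z : ℤ => (z : ℝ)) h
  push_cast at h2
  simpa using h2

lemma neg_one_pow_sub_real {i s : ℕ} (h : i ≤ s) : (-1 : ℝ) ^ (s - i) = (-1) ^ s * (-1) ^ i := by
  have h2 : (-1 : ℝ) ^ i * (-1 : ℝ) ^ i = 1 := by
    rw [← pow_add]; exact Even.neg_one_pow ⟨i, rfl⟩
  calc (-1 : ℝ) ^ (s - i) = (-1 : ℝ) ^ (s - i) * ((-1 : ℝ) ^ i * (-1 : ℝ) ^ i) := by rw [h2, mul_one]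
    _ = ((-1 : ℝ) ^ (s - i) * (-1 : ℝ) ^ i) * (-1 : ℝ) ^ i := by ring
    _ = (-1 : ℝ) ^ s * (-1 : ℝ) ^ i := by rw [← pow_add, Nat.sub_add_cancel h]

lemma id1 {r m : ℕ} (hrm : r ≤ m) :
    ∑ k ∈ Finset.Icc r m, (-1 : ℝ) ^ (m - k) * (((m - 1).choose (m - k) : ℕ) : ℝ)
        * (((k - 1).choose (k - r) : ℕ) : ℝ) = if m = r then 1 else 0 := by
  rcases Nat.eq_zero_or_pos r with rfl | hr
  · rcases Nat.eq_zero_or_pos m with rfl | hm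
    · simp
    · rw [if_neg (by omega)]
      apply Finset.sum_eq_zero
      intro k hk
      rcases Nat.eq_zero_or_pos k with rfl | hk1
      · have : (m - 1).choose (m - 0) = 0 := Nat.choose_eq_zero_of_lt (by omega)
        rw [this]; simp
      · have : (k - 1).choose (k - 0) = 0 := Nat.choose_eq_zero_of_lt (by omega)
        rw [this]; simp
  · obtain ⟨r', rfl⟩ : ∃ r', r = r' + 1 := ⟨r - 1, by omega⟩
    obtain ⟨m', rfl⟩ : ∃ m', m = m' + 1 := ⟨m - 1, by omega⟩
    have hrm' : r' ≤ m' := by omega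
    set s := m' - r' with hs
    have hIcc : Finset.Icc (r' + 1) (m' + 1) = Finset.Ico (r' + 1) (m' + 2) := by
      ext x; simp only [Finset.mem_Icc, Finset.mem_Ico]; omega
    rw [hIcc, Finset.sum_Ico_eq_sum_range]
    have hrange : m' + 2 - (r' + 1) = s + 1 := by omega
    rw [hrange]
    have hterm : ∀ i ∈ Finset.range (s + 1),
        (-1 : ℝ) ^ (m' + 1 - (r' + 1 + i)) * (((m' + 1 - 1).choose (m' + 1 - (r' + 1 + i)) : ℕ) : ℝ)
          * (((r' + 1 + i - 1).choose (r' + 1 + i - (r' + 1)) : ℕ) : ℝ)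
        = ((m'.choose r' : ℕ) : ℝ) * (-1 : ℝ) ^ s * ((-1 : ℝ) ^ i * ((s.choose i : ℕ) : ℝ)) := by
      intro i hi
      rw [Finset.mem_range] at hi
      have hi' : i ≤ s := by omega
      have e1 : m' + 1 - (r' + 1 + i) = s - i := by omega
      have e2 : m' + 1 - 1 = m' := by omega
      have e3 : r' + 1 + i - 1 = r' + i := by omega
      have e4 : r' + 1 + i - (r' + 1) = i := by omega
      rw [e1, e2, e3, e4]
      have hc1 : m'.choose (s - i) = m'.choose (r' + i) := by
        rw [← Nat.choose_symm (show r' + i ≤ m' by omega)]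
        congr 1
        omega
      have hc2 : (r' + i).choose i = (r' + i).choose r' := by
        rw [← Nat.choose_symm (show r' ≤ r' + i by omega)]
        congr 1
        omega
      have hc3 : m'.choose (r' + i) * (r' + i).choose r' = m'.choose r' * (m' - r').choose (r' + i - r') :=
        Nat.choose_mul (show r' ≤ r' + i by omega)
      have e5 : r' + i - r' = i := by omega
      rw [e5] at hc3
      rw [hc1, hc2, neg_one_pow_sub_real hi']
      have : (m'.choose (r' + i) : ℝ) * ((r' + i).choose r' : ℝ) = (m'.choose r' : ℝ) * ((m' - r').choose i : ℝ) := by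
        exact_mod_cast congrArg (fun z : ℕ => (z : ℝ)) hc3
      calc (-1:ℝ) ^ s * (-1:ℝ) ^ i * (m'.choose (r' + i) : ℝ) * ((r' + i).choose r' : ℝ)
          = (-1:ℝ) ^ s * (-1:ℝ) ^ i * ((m'.choose (r' + i) : ℝ) * ((r' + i).choose r' : ℝ)) := by ring
        _ = (-1:ℝ) ^ s * (-1:ℝ) ^ i * ((m'.choose r' : ℝ) * ((m' - r').choose i : ℝ)) := by rw [this]
        _ = ((m'.choose r' : ℕ) : ℝ) * (-1 : ℝ) ^ s * ((-1 : ℝ) ^ i * ((s.choose i : ℕ) : ℝ)) := by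
            rw [hs]; ring
    rw [Finset.sum_congr rfl hterm, ← Finset.mul_sum, alt_sum_choose_real]
    by_cases hms : m' = r'
    · have : s = 0 := by omega
      rw [this] at *
      rw [if_pos rfl, if_pos (by omega), hms, Nat.choose_self]
      simp
    · have : s ≠ 0 := by omega
      rw [if_neg this, if_neg (by omega)]
      simp
lemma ffc {k r : ℕ} (hrk : r ≤ k) :
    (k.choose r : ℝ) * ff ((k : ℝ) - 1) (k - r)
      = (k.factorial : ℝ) * ((r.factorial : ℝ))⁻¹ * (((k - 1).choose (k - r) : ℕ) : ℝ) := by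
  rcases Nat.eq_zero_or_pos k with rfl | hk
  · interval_cases r
    simp [ff]
  · have h1 : ((k : ℝ) - 1) = ((k - 1 : ℕ) : ℝ) := by
      rw [Nat.cast_sub (by omega), Nat.cast_one]
    rw [h1, ff_nat_s18, Nat.descFactorial_eq_factorial_mul_choose]
    have h2 : (k.choose r) * (k - r).factorial * (((k-1).choose (k-r))) * r.factorial
        = k.factorial * ((k-1).choose (k-r)) := by
      have := Nat.choose_mul_factorial_mul_factorial hrk
      calc k.choose r * (k - r).factorial * ((k-1).choose (k-r)) * r.factorial
          = (k.choose r * r.factorial * (k - r).factorial) * ((k-1).choose (k-r)) := by ring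
        _ = k.factorial * ((k-1).choose (k-r)) := by rw [this]
    have h2' : (k.choose r : ℝ) * ((k - r).factorial : ℝ) * (((k-1).choose (k-r)) : ℝ) * (r.factorial : ℝ)
        = (k.factorial : ℝ) * (((k-1).choose (k-r)) : ℝ) := by exact_mod_cast congrArg (fun z : ℕ => (z:ℝ)) h2
    have hr : (r.factorial : ℝ) ≠ 0 := Nat.cast_ne_zero.2 r.factorial_ne_zero
    push_cast
    push_cast at h2'
    field_simp
    linear_combination h2'

lemma innerK {V : ℝ} (hV : V ≠ 0) {l r m n : ℕ} (hlr : l ≤ r) (hrn : r ≤ n) (hmn : m ≤ n) :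
    ∑ k ∈ Finset.Icc l n, (k.factorial : ℝ)⁻¹ * pp V k m * (m.factorial : ℝ)
        * ((k.choose r : ℝ) * ff ((k : ℝ) - 1) (k - r) * V ^ r)
      = if m = r then 1 else 0 := by
  rcases lt_or_ge m r with hmr | hrm
  · rw [if_neg (by omega)]
    apply Finset.sum_eq_zero
    intro k hk
    rcases lt_or_ge m k with h | h
    · rw [pp, if_pos h]; ring
    · have : k.choose r = 0 := Nat.choose_eq_zero_of_lt (by omega)
      rw [this]; push_cast; ring
  · have hsub : Finset.Icc r m ⊆ Finset.Icc l n := by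
      intro k hk
      rw [Finset.mem_Icc] at *
      omega
    rw [← Finset.sum_subset hsub]
    · have hterm : ∀ k ∈ Finset.Icc r m,
          (k.factorial : ℝ)⁻¹ * pp V k m * (m.factorial : ℝ)
            * ((k.choose r : ℝ) * ff ((k : ℝ) - 1) (k - r) * V ^ r)
          = ((m.factorial : ℝ) * ((r.factorial : ℝ))⁻¹ * (V⁻¹) ^ m * V ^ r)
            * ((-1 : ℝ) ^ (m - k) * (((m - 1).choose (m - k) : ℕ) : ℝ)
                * (((k - 1).choose (k - r) : ℕ) : ℝ)) := by
        intro k hk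
        rw [Finset.mem_Icc] at hk
        rw [pp, if_neg (by omega), ffc hk.1]
        have hkf : (k.factorial : ℝ) ≠ 0 := Nat.cast_ne_zero.2 k.factorial_ne_zero
        field_simp
      rw [Finset.sum_congr rfl hterm, ← Finset.mul_sum, id1 hrm]
      by_cases h : m = r
      · subst h
        simp only [if_pos rfl, mul_one]
        have hmf : (m.factorial : ℝ) ≠ 0 := Nat.cast_ne_zero.2 m.factorial_ne_zero
        field_simp
        rw [one_div, inv_pow, inv_mul_cancel₀ (pow_ne_zero m hV)]
      · simp only [if_neg h, mul_zero]
    · intro k hk hk2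
      rw [Finset.mem_Icc] at hk
      rw [Finset.mem_Icc] at hk2
      rcases lt_or_ge m k with h | h
      · rw [pp, if_pos h]; ring
      · have : k.choose r = 0 := Nat.choose_eq_zero_of_lt (by omega)
        rw [this]; push_cast; ring
lemma oneG_pow (u : ℝ) (hu : (1 : ℝ) - u ≠ 0) (k : ℕ) :
    ((1 : PowerSeries ℝ) - (1 - u) • (PowerSeries.exp ℝ - PowerSeries.C u)⁻¹) ^ k
      = Phi (pp (1 - u) k) := by
  set Eu : PowerSeries ℝ := PowerSeries.exp ℝ - PowerSeries.C u with hEudef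
  set G : PowerSeries ℝ := (1 - u) • Eu⁻¹ with hGdef
  have hconst : PowerSeries.constantCoeff Eu = 1 - u := by
    rw [hEudef, map_sub, PowerSeries.constantCoeff_exp, PowerSeries.constantCoeff_C]
  have hEu : W + PowerSeries.C (1 - u) = Eu := by
    rw [map_sub, map_one, hEudef, W]
    ring
  have hGE : ((1 : PowerSeries ℝ) - G) * Eu = W := by
    have h1 : G * Eu = PowerSeries.C (1 - u) := by
      rw [hGdef, smul_mul_assoc, PowerSeries.inv_mul_cancel Eu (by rw [hconst]; exact hu),
        PowerSeries.smul_eq_C_mul, mul_one]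
    rw [sub_mul, one_mul, h1, ← hEu]
    ring
  have hne : PowerSeries.constantCoeff (Eu ^ k) ≠ 0 := by
    rw [map_pow, hconst]
    exact pow_ne_zero k hu
  have hcancel : Eu ^ k * (Eu ^ k)⁻¹ = 1 := PowerSeries.mul_inv_cancel _ hne
  have h2 : ((1 : PowerSeries ℝ) - G) ^ k * Eu ^ k = W ^ k := by
    rw [← mul_pow, hGE]
  have h3 : Phi (pp (1 - u) k) * Eu ^ k = W ^ k := by
    rw [← hEu]
    exact Phi_mul_pow hu k
  calc ((1 : PowerSeries ℝ) - G) ^ k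
      = ((1 : PowerSeries ℝ) - G) ^ k * (Eu ^ k * (Eu ^ k)⁻¹) := by rw [hcancel, mul_one]
    _ = (((1 : PowerSeries ℝ) - G) ^ k * Eu ^ k) * (Eu ^ k)⁻¹ := by ring
    _ = (Phi (pp (1 - u) k) * Eu ^ k) * (Eu ^ k)⁻¹ := by rw [h2, h3]
    _ = Phi (pp (1 - u) k) * (Eu ^ k * (Eu ^ k)⁻¹) := by ring
    _ = Phi (pp (1 - u) k) := by rw [hcancel, mul_one]

lemma sumJ (u : ℝ) (hu : (1 : ℝ) - u ≠ 0) (n k : ℕ) :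
    ∑ j ∈ Finset.range (k + 1), (-1 : ℝ) ^ j * (k.choose j : ℝ) * FE u j n
      = cN n (Phi (pp (1 - u) k)) := by
  rw [← oneG_pow u hu k]
  set G : PowerSeries ℝ := (1 - u) • (PowerSeries.exp ℝ - PowerSeries.C u)⁻¹ with hGdef
  have hsub : ((1 : PowerSeries ℝ) - G) ^ k
      = ∑ j ∈ Finset.range (k + 1), (-G) ^ j * 1 ^ (k - j) * ((k.choose j : ℕ) : PowerSeries ℝ) := by
    rw [← add_pow]
    congr 1
    ring
  rw [hsub, cN, map_sum, Finset.mul_sum]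
  apply Finset.sum_congr rfl
  intro j _
  have h1 : (-G) ^ j = PowerSeries.C ((-1 : ℝ) ^ j) * G ^ j := by
    rw [neg_pow, map_pow, map_neg, map_one]
  have h2 : ((k.choose j : ℕ) : PowerSeries ℝ) = PowerSeries.C ((k.choose j : ℝ)) :=
    (map_natCast (PowerSeries.C) _).symm
  rw [h1, h2, one_pow, mul_one, PowerSeries.coeff_mul_C, PowerSeries.coeff_C_mul]
  rw [FE, cN]
  ring

lemma cN_Phi (g : ℕ → ℝ) (n : ℕ) :
    cN n (Phi g) = ∑ m ∈ Finset.range (n + 1), g m * cN n (W ^ m) := by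
  rw [cN, coeff_Phi g (le_refl n), Finset.mul_sum]
  apply Finset.sum_congr rfl
  intro m _
  rw [cN]
  ring

theorem stmt18 (p : ℝ) (hp0 : 0 < p) (hp1 : p < 1) (u : ℝ) (hu : u = 1 / (1 - p))
    (n l : ℕ) (hln : l ≤ n) :
    (∑ k ∈ Finset.Icc l n, ∑ j ∈ Finset.range (k + 1), ∑ m ∈ Finset.Icc l k,
        (-1 : ℝ) ^ j * (k.factorial : ℝ)⁻¹ * (k.choose j : ℝ) * (k.choose m : ℝ) *
          ff ((k : ℝ) - 1) (k - m) * (p / (p - 1)) ^ m * FE u j n * S1 m l)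
      = (if n = l then (1 : ℝ) else 0) := by
  have hp1' : (1 : ℝ) - p ≠ 0 := by
    intro h
    have : p = 1 := by linarith
    linarith
  have hp0' : p ≠ 0 := ne_of_gt hp0
  have hpm1 : p - 1 ≠ 0 := by intro h; apply hp1'; linarith
  have hup : p / (p - 1) = 1 - u := by
    rw [hu]
    field_simp
    ring
  have hV : (1 : ℝ) - u ≠ 0 := by
    rw [← hup]
    exact div_ne_zero hp0' hpm1
  set V : ℝ := 1 - u with hVdef
  rw [hup]
  -- Step 1: factor each k-term
  have step1 : ∀ k ∈ Finset.Icc l n,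
      (∑ j ∈ Finset.range (k + 1), ∑ m ∈ Finset.Icc l k,
        (-1 : ℝ) ^ j * (k.factorial : ℝ)⁻¹ * (k.choose j : ℝ) * (k.choose m : ℝ) *
          ff ((k : ℝ) - 1) (k - m) * V ^ m * FE u j n * S1 m l)
      = (k.factorial : ℝ)⁻¹ *
          ((∑ j ∈ Finset.range (k + 1), (-1 : ℝ) ^ j * (k.choose j : ℝ) * FE u j n) *
           (∑ m ∈ Finset.Icc l k, (k.choose m : ℝ) * ff ((k : ℝ) - 1) (k - m) * V ^ m * S1 m l)) := by
    intro k _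
    rw [Finset.sum_mul_sum, Finset.mul_sum]
    apply Finset.sum_congr rfl
    intro j _
    rw [Finset.mul_sum]
    apply Finset.sum_congr rfl
    intro m _
    ring
  rw [Finset.sum_congr rfl step1]
  -- Step 2: rewrite the j-sum
  have step2 : ∀ k ∈ Finset.Icc l n,
      (k.factorial : ℝ)⁻¹ *
          ((∑ j ∈ Finset.range (k + 1), (-1 : ℝ) ^ j * (k.choose j : ℝ) * FE u j n) *
           (∑ m ∈ Finset.Icc l k, (k.choose m : ℝ) * ff ((k : ℝ) - 1) (k - m) * V ^ m * S1 m l))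
      = (k.factorial : ℝ)⁻¹ *
          ((∑ m' ∈ Finset.range (n + 1), pp V k m' * ((m'.factorial : ℝ) * S2 n m')) *
           (∑ m ∈ Finset.Icc l n, (k.choose m : ℝ) * ff ((k : ℝ) - 1) (k - m) * V ^ m * S1 m l)) := by
    intro k hk
    rw [Finset.mem_Icc] at hk
    have h1 : ∑ j ∈ Finset.range (k + 1), (-1 : ℝ) ^ j * (k.choose j : ℝ) * FE u j n
        = ∑ m' ∈ Finset.range (n + 1), pp V k m' * ((m'.factorial : ℝ) * S2 n m') := by
      rw [sumJ u hV n k, cN_Phi]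
      apply Finset.sum_congr rfl
      intro m' _
      rw [cN_W_pow']
    have h2 : ∑ m ∈ Finset.Icc l k, (k.choose m : ℝ) * ff ((k : ℝ) - 1) (k - m) * V ^ m * S1 m l
        = ∑ m ∈ Finset.Icc l n, (k.choose m : ℝ) * ff ((k : ℝ) - 1) (k - m) * V ^ m * S1 m l := by
      apply Finset.sum_subset
      · apply Finset.Icc_subset_Icc le_rfl hk.2
      · intro m hm hm2
        rw [Finset.mem_Icc] at hm hm2
        have : k.choose m = 0 := Nat.choose_eq_zero_of_lt (by omega)
        rw [this]
        push_cast
        ring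
    rw [h1, h2]
  rw [Finset.sum_congr rfl step2]
  -- Step 3: expand products into triple sums
  have step3 : ∀ k ∈ Finset.Icc l n,
      (k.factorial : ℝ)⁻¹ *
          ((∑ m' ∈ Finset.range (n + 1), pp V k m' * ((m'.factorial : ℝ) * S2 n m')) *
           (∑ m ∈ Finset.Icc l n, (k.choose m : ℝ) * ff ((k : ℝ) - 1) (k - m) * V ^ m * S1 m l))
      = ∑ m' ∈ Finset.range (n + 1), ∑ m ∈ Finset.Icc l n,
          (S2 n m' * S1 m l) *
            ((k.factorial : ℝ)⁻¹ * pp V k m' * (m'.factorial : ℝ) *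
              ((k.choose m : ℝ) * ff ((k : ℝ) - 1) (k - m) * V ^ m)) := by
    intro k _
    rw [Finset.sum_mul_sum, Finset.mul_sum]
    apply Finset.sum_congr rfl
    intro m' _
    rw [Finset.mul_sum]
    apply Finset.sum_congr rfl
    intro m _
    ring
  rw [Finset.sum_congr rfl step3]
  -- Step 4: swap sums to put k innermost
  rw [Finset.sum_comm]
  have step4 : ∀ m' ∈ Finset.range (n + 1),
      (∑ k ∈ Finset.Icc l n, ∑ m ∈ Finset.Icc l n,
          (S2 n m' * S1 m l) *
            ((k.factorial : ℝ)⁻¹ * pp V k m' * (m'.factorial : ℝ) *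
              ((k.choose m : ℝ) * ff ((k : ℝ) - 1) (k - m) * V ^ m)))
      = ∑ m ∈ Finset.Icc l n, (if m' = m then S2 n m' * S1 m l else 0) := by
    intro m' hm'
    rw [Finset.mem_range] at hm'
    rw [Finset.sum_comm]
    apply Finset.sum_congr rfl
    intro m hm
    rw [Finset.mem_Icc] at hm
    rw [← Finset.mul_sum, innerK hV hm.1 hm.2 (by omega)]
    by_cases h : m' = m
    · rw [if_pos h, if_pos h, mul_one]
    · rw [if_neg h, if_neg h, mul_zero]
  rw [Finset.sum_congr rfl step4]
  -- Step 5: collapse the diagonal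
  rw [Finset.sum_comm]
  have step5 : ∀ m ∈ Finset.Icc l n,
      (∑ m' ∈ Finset.range (n + 1), (if m' = m then S2 n m' * S1 m l else 0))
      = S2 n m * S1 m l := by
    intro m hm
    rw [Finset.mem_Icc] at hm
    rw [Finset.sum_ite_eq' (Finset.range (n + 1)) m (fun m' => S2 n m' * S1 m l)]
    rw [if_pos (Finset.mem_range.2 (by omega))]
  rw [Finset.sum_congr rfl step5]
  -- Step 6: extend to full range and apply Stirling orthogonality
  have step6 : ∑ m ∈ Finset.Icc l n, S2 n m * S1 m l
      = ∑ m ∈ Finset.range (n + 1), S2 n m * S1 m l := by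
    apply Finset.sum_subset
    · intro m hm
      rw [Finset.mem_Icc] at hm
      rw [Finset.mem_range]
      omega
    · intro m hm hm2
      rw [Finset.mem_range] at hm
      rw [Finset.mem_Icc] at hm2
      rw [S1_eq_zero (by omega), mul_zero]
  rw [step6, stirling_orth]
end
end
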